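/- Let a, b be real numbers and let r be chosen uniformly at random from the interval [0, 1/2). Assign a real number x to the grid cell with index floor(2(x + r)). Then the probability that a and b are assigned to different cells is at most 2|a - b|. -/
import Mathlib


open scoped ENNReal

open MeasureTheory

lemma grid_key (a b : ℝ) (hab : a ≤ b) :
    (volume.restrict (Set.Ico (0 : ℝ) (1 / 2)))
        {r : ℝ | ⌊2 * (a + r)⌋ ≠ ⌊2 * (b + r)⌋}
      ≤ ENNReal.ofReal (b - a) := by
  set d : ℝ := b - a with hd
  clear_value d
  have hd0 : 0 ≤ d := by simp [hd]; linarith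
  rw [Measure.restrict_apply' measurableSet_Ico]
  by_cases hsmall : d < 1 / 2
  · set n0 : ℤ := ⌊2 * b⌋ with hn0
    set c : ℝ := (n0 : ℝ) / 2 - b with hc
    clear_value c
    have hc0 : c ≤ 0 := by
      have := Int.floor_le (2 * b); simp only [hc]; linarith
    have hcm : -(1 / 2) < c := by
      have := Int.lt_floor_add_one (2 * b); simp only [hc]; push_cast at this ⊢; linarith
    have hsub : {r : ℝ | ⌊2 * (a + r)⌋ ≠ ⌊2 * (b + r)⌋} ∩ Set.Ico (0 : ℝ) (1 / 2)
        ⊆ Set.Ico (0 : ℝ) (c + d) ∪ Set.Ico (c + 1 / 2) (min (c + 1 / 2 + d) (1 / 2)) := by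
      rintro r ⟨hne, hr0, hr1⟩
      have hlt : ⌊2 * (a + r)⌋ < ⌊2 * (b + r)⌋ :=
        lt_of_le_of_ne (Int.floor_le_floor (by linarith)) hne
      set n : ℤ := ⌊2 * (b + r)⌋ with hn
      clear_value n
      have h1 : (n : ℝ) ≤ 2 * (b + r) := by rw [hn]; exact Int.floor_le _
      have h2 : 2 * (a + r) < (n : ℝ) := by
        have : (⌊2 * (a + r)⌋ : ℝ) + 1 ≤ (n : ℝ) := by exact_mod_cast hlt
        have := Int.lt_floor_add_one (2 * (a + r))
        linarith
      have hnlo : n0 ≤ n := by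
        rw [hn0, hn]; exact Int.floor_le_floor (by linarith)
      have hnhi : n ≤ n0 + 1 := by
        have hb1 : (2 : ℝ) * b < (n0 : ℝ) + 1 := Int.lt_floor_add_one (2 * b)
        have : (n : ℝ) < (n0 : ℝ) + 2 := by linarith
        have h3 : n < n0 + 2 := by exact_mod_cast this
        omega
      rcases (by omega : n = n0 ∨ n = n0 + 1) with rfl | rfl
      · left
        constructor
        · exact hr0
        · simp only [hc, hd]; push_cast at h2 ⊢; linarith
      · right
        refine ⟨?_, lt_min ?_ hr1⟩
        · simp only [hc]; push_cast at h1 ⊢; linarith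
        · simp only [hc, hd]; push_cast at h2 ⊢; linarith
    calc volume ({r : ℝ | ⌊2 * (a + r)⌋ ≠ ⌊2 * (b + r)⌋} ∩ Set.Ico (0 : ℝ) (1 / 2))
        ≤ volume (Set.Ico (0 : ℝ) (c + d) ∪
            Set.Ico (c + 1 / 2) (min (c + 1 / 2 + d) (1 / 2))) := measure_mono hsub
      _ ≤ volume (Set.Ico (0 : ℝ) (c + d)) +
            volume (Set.Ico (c + 1 / 2) (min (c + 1 / 2 + d) (1 / 2))) := measure_union_le _ _
      _ = ENNReal.ofReal (c + d) + ENNReal.ofReal (min (c + 1 / 2 + d) (1 / 2) - (c + 1 / 2)) := by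
            rw [Real.volume_Ico, Real.volume_Ico, sub_zero]
      _ ≤ ENNReal.ofReal d := by
            rcases le_or_gt (c + d) 0 with h | h
            · have h1 : ENNReal.ofReal (c + d) = 0 := ENNReal.ofReal_eq_zero.mpr h
              rw [h1, zero_add]
              apply ENNReal.ofReal_le_ofReal
              rcases min_cases (c + 1 / 2 + d) (1 / 2) with ⟨heq, _⟩ | ⟨heq, _⟩ <;>
                rw [heq] <;> linarith
            · have hmin : min (c + 1 / 2 + d) (1 / 2) = 1 / 2 := min_eq_right (by linarith)
              rw [hmin]
              rw [← ENNReal.ofReal_add (by linarith) (by linarith)]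
              apply ENNReal.ofReal_le_ofReal
              linarith
  · calc volume ({r : ℝ | ⌊2 * (a + r)⌋ ≠ ⌊2 * (b + r)⌋} ∩ Set.Ico (0 : ℝ) (1 / 2))
        ≤ volume (Set.Ico (0 : ℝ) (1 / 2)) := measure_mono Set.inter_subset_right
      _ = ENNReal.ofReal (1 / 2) := by rw [Real.volume_Ico, sub_zero]
      _ ≤ ENNReal.ofReal d := ENNReal.ofReal_le_ofReal (by linarith [not_lt.mp hsmall])

/-- For a uniformly random offset `r ∈ [0, 1/2)`, the probability that two reals
`a` and `b` land in different cells of the shifted grid of cell size `1/2` is at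
most `2 |a - b|`. -/
theorem prob_separated_by_random_grid_line
    (a b : ℝ) :
    ((2 : ℝ≥0∞) • (volume.restrict (Set.Ico (0 : ℝ) (1 / 2))))
        {r : ℝ | ⌊2 * (a + r)⌋ ≠ ⌊2 * (b + r)⌋}
      ≤ ENNReal.ofReal (2 * |a - b|) := by
  have h2 : (0 : ℝ) ≤ 2 := by norm_num
  rcases le_total a b with hab | hab
  · have habs : |a - b| = b - a := by rw [abs_sub_comm, abs_of_nonneg (by linarith)]
    rw [habs, ENNReal.ofReal_mul h2]
    simp only [Measure.smul_apply, smul_eq_mul]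
    have : ENNReal.ofReal (2 : ℝ) = 2 := by norm_num
    rw [this]
    exact mul_le_mul_right (grid_key a b hab) 2
  · have habs : |a - b| = a - b := abs_of_nonneg (by linarith)
    have hset : {r : ℝ | ⌊2 * (a + r)⌋ ≠ ⌊2 * (b + r)⌋}
        = {r : ℝ | ⌊2 * (b + r)⌋ ≠ ⌊2 * (a + r)⌋} := by
      ext r; exact ne_comm
    rw [habs, hset, ENNReal.ofReal_mul h2]
    simp only [Measure.smul_apply, smul_eq_mul]
    have : ENNReal.ofReal (2 : ℝ) = 2 := by norm_num
    rw [this]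
    exact mul_le_mul_right (grid_key b a hab) 2
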